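/- The complete multipartite graph K_{n_1,...,n_m} with part sizes n_1 ≥ n_2 ≥ ... ≥ n_m has smallest adjacency eigenvalue at least -n_1, with equality if and only if n_1 = n_2. -/

import Mathlib

/-- The smallest eigenvalue of a real symmetric matrix. -/
noncomputable def minEig {n : Type*} [Fintype n] [DecidableEq n] (hn : Nonempty n)
    {A : Matrix n n ℝ} (hA : A.IsHermitian) : ℝ :=
  Finset.univ.inf' (Finset.univ_nonempty_iff.mpr hn) hA.eigenvalues

/-- The adjacency matrix of a graph is Hermitian. -/
lemma adjHerm {V : Type*} [Fintype V] (G : SimpleGraph V) [DecidableRel G.Adj] :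
    (G.adjMatrix ℝ).IsHermitian := by
  ext i j
  simp [Matrix.conjTranspose_apply, SimpleGraph.adj_comm]

instance {ι : Type*} [DecidableEq ι] (W : ι → Type*) :
    DecidableRel (SimpleGraph.completeMultipartiteGraph W).Adj := fun v w =>
  inferInstanceAs (Decidable (v.1 ≠ w.1))

open Matrix Finset
lemma det_add_smul_one_eq {N : Type*} [Fintype N] [DecidableEq N] {A : Matrix N N ℝ}
    (hA : A.IsHermitian) (c : ℝ) :
    (A + c • (1 : Matrix N N ℝ)).det = ∏ i, (hA.eigenvalues i + c) := by
  set U : Matrix N N ℝ := (hA.eigenvectorUnitary : Matrix N N ℝ)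
  have hU : U * star U = 1 := mem_unitaryGroup_iff.mp hA.eigenvectorUnitary.2
  have key : A + c • (1 : Matrix N N ℝ)
      = U * (Matrix.diagonal (fun i => hA.eigenvalues i + c)) * star U := by
    conv_lhs => rw [hA.spectral_theorem]
    have : c • (1 : Matrix N N ℝ) = U * (c • (1 : Matrix N N ℝ)) * star U := by
      rw [Matrix.mul_smul, Matrix.mul_one, Matrix.smul_mul, hU]
    rw [Unitary.conjStarAlgAut_apply, this, ← Matrix.add_mul, ← Matrix.mul_add]
    congr 2
    rw [Matrix.smul_one_eq_diagonal, Matrix.diagonal_add]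
    congr 1
  rw [key, Matrix.det_mul, Matrix.det_mul]
  have h1 : U.det * (star U).det = 1 := by rw [← Matrix.det_mul, hU, Matrix.det_one]
  rw [Matrix.det_diagonal]
  linear_combination (∏ i : N, (hA.eigenvalues i + c)) * h1

lemma exists_eigen_iff {N : Type*} [Fintype N] [DecidableEq N] {A : Matrix N N ℝ}
    (hA : A.IsHermitian) (c : ℝ) :
    (∃ i, hA.eigenvalues i = -c) ↔ ∃ v ≠ (0 : N → ℝ), (A + c • 1) *ᵥ v = 0 := by
  have := (Matrix.exists_mulVec_eq_zero_iff (M := A + c • 1)).symm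
  simp only [← exists_prop] at this ⊢
  rw [← this, det_add_smul_one_eq hA c, Finset.prod_eq_zero_iff]
  constructor
  · rintro ⟨i, hi⟩; exact ⟨i, mem_univ i, by rw [hi]; ring⟩
  · rintro ⟨i, _, hi⟩; exact ⟨i, by linarith⟩

lemma eig_ge {N : Type*} [Fintype N] [DecidableEq N] {A : Matrix N N ℝ}
    (hA : A.IsHermitian) (c : ℝ) (h : ∀ x : N → ℝ, 0 ≤ x ⬝ᵥ ((A + c • 1) *ᵥ x)) (i : N) :
    -c ≤ hA.eigenvalues i := by
  set v : N → ℝ := ⇑(hA.eigenvectorBasis i) with hvdef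
  have hv : A *ᵥ v = hA.eigenvalues i • v := hA.mulVec_eigenvectorBasis i
  have hv0 : v ≠ 0 := by
    intro h0
    exact hA.eigenvectorBasis.orthonormal.ne_zero i (by ext j; exact congrFun h0 j)
  have hq : (0:ℝ) < v ⬝ᵥ v := by
    have h1 : (0:ℝ) ≤ v ⬝ᵥ v := Finset.sum_nonneg fun j _ => mul_self_nonneg _
    rcases h1.lt_or_eq with h' | h'
    · exact h'
    · exact absurd (dotProduct_self_eq_zero.mp h'.symm) hv0
  have hform : v ⬝ᵥ ((A + c • 1) *ᵥ v) = (hA.eigenvalues i + c) * (v ⬝ᵥ v) := by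
    rw [add_mulVec, smul_mulVec, one_mulVec, dotProduct_add, hv]
    simp [dotProduct_smul, smul_eq_mul]
    ring
  have := h v
  rw [hform] at this
  nlinarith
lemma mulVec_eq (m : ℕ) (n : Fin m → ℕ) (c : ℝ) (x : ((i : Fin m) × Fin (n i)) → ℝ) :
    (((SimpleGraph.completeMultipartiteGraph (fun i : Fin m => Fin (n i))).adjMatrix ℝ
      + c • 1) *ᵥ x)
    = fun v => (∑ w, x w) - (∑ k, x ⟨v.1, k⟩) + c * x v := by
  classical
  funext v
  simp only [Pi.add_apply, add_mulVec, smul_mulVec, one_mulVec, Pi.smul_apply,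
    smul_eq_mul]
  congr 1
  have hentry : ∀ w, (SimpleGraph.completeMultipartiteGraph
      (fun i : Fin m => Fin (n i))).adjMatrix ℝ v w * x w
      = x w - (if v.1 = w.1 then x w else 0) := by
    intro w
    by_cases h : v.1 = w.1 <;>
      simp [SimpleGraph.adjMatrix, SimpleGraph.completeMultipartiteGraph, h]
  rw [mulVec, dotProduct]
  simp_rw [hentry]
  rw [Finset.sum_sub_distrib]
  congr 1
  rw [← Finset.univ_sigma_univ, Finset.sum_sigma]
  rw [Finset.sum_eq_single v.1]
  · simp
  · intro j _ hj
    simp [Ne.symm hj]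
  · simp

lemma quad_eq (m : ℕ) (n : Fin m → ℕ) (c : ℝ) (x : ((i : Fin m) × Fin (n i)) → ℝ) :
    x ⬝ᵥ ((((SimpleGraph.completeMultipartiteGraph (fun i : Fin m => Fin (n i))).adjMatrix ℝ
      + c • 1)) *ᵥ x)
    = (∑ v, x v)^2 + ∑ i, (c * (∑ k, (x ⟨i, k⟩)^2) - (∑ k, x ⟨i, k⟩)^2) := by
  classical
  rw [mulVec_eq m n c x, dotProduct]
  have expand : ∀ v : (i : Fin m) × Fin (n i),
      x v * ((∑ w, x w) - (∑ k, x ⟨v.1, k⟩) + c * x v)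
      = x v * (∑ w, x w) - x v * (∑ k, x ⟨v.1, k⟩) + c * (x v * x v) := by
    intro v; ring
  simp_rw [expand]
  rw [Finset.sum_add_distrib, Finset.sum_sub_distrib]
  have h0 : ∑ v : (i : Fin m) × Fin (n i), x v * (∑ w, x w) = (∑ v, x v)^2 := by
    rw [← Finset.sum_mul, sq]
  have h1 : ∑ v : (i : Fin m) × Fin (n i), x v * (∑ k, x ⟨v.1, k⟩)
      = ∑ i, (∑ k, x ⟨i, k⟩)^2 := by
    rw [← Finset.univ_sigma_univ, Finset.sum_sigma]
    congr 1; funext i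
    show ∑ s : Fin (n i), x ⟨i, s⟩ * (∑ k : Fin (n i), x ⟨i, k⟩) = _
    rw [← Finset.sum_mul, sq]
  have h2 : ∑ v : (i : Fin m) × Fin (n i), c * (x v * x v)
      = c * ∑ i, ∑ k, (x ⟨i, k⟩)^2 := by
    rw [← Finset.mul_sum, ← Finset.univ_sigma_univ, Finset.sum_sigma]
    congr 1
    apply Finset.sum_congr rfl
    intro i _
    apply Finset.sum_congr rfl
    intro k _
    rw [sq]
  rw [h0, h1, h2, Finset.sum_sub_distrib, ← Finset.mul_sum]
  ring

section helpers

variable {m : ℕ} {n : Fin m → ℕ}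

lemma term_nonneg (hm : 0 < m) (hmono : Antitone n)
    (x : ((i : Fin m) × Fin (n i)) → ℝ) (i : Fin m) :
    0 ≤ ((n ⟨0, hm⟩ : ℕ) : ℝ) * (∑ k, (x ⟨i, k⟩)^2) - (∑ k, x ⟨i, k⟩)^2 := by
  have hCS : (∑ k, x ⟨i, k⟩)^2 ≤ (n i : ℝ) * ∑ k, (x ⟨i, k⟩)^2 := by
    have := sq_sum_le_card_mul_sum_sq (s := (univ : Finset (Fin (n i))))
      (f := fun k => x ⟨i, k⟩)
    simpa using this
  have hle : ((n i : ℕ) : ℝ) ≤ ((n ⟨0, hm⟩ : ℕ) : ℝ) := by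
    exact_mod_cast hmono (Fin.le_def.mpr (Nat.zero_le _))
  have hQnn : 0 ≤ ∑ k, (x ⟨i, k⟩)^2 := Finset.sum_nonneg fun k _ => sq_nonneg _
  nlinarith

lemma quad_nonneg (hm : 0 < m) (hmono : Antitone n)
    (x : ((i : Fin m) × Fin (n i)) → ℝ) :
    0 ≤ x ⬝ᵥ ((((SimpleGraph.completeMultipartiteGraph (fun i : Fin m => Fin (n i))).adjMatrix ℝ
      + ((n ⟨0, hm⟩ : ℕ) : ℝ) • 1)) *ᵥ x) := by
  rw [quad_eq m n _ x]
  exact add_nonneg (sq_nonneg _) (Finset.sum_nonneg fun i _ => term_nonneg hm hmono x i)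

lemma forward_lemma (hm : 2 ≤ m) (hpos : ∀ i, 0 < n i) (hmono : Antitone n)
    (x : ((i : Fin m) × Fin (n i)) → ℝ) (hx0 : x ≠ 0)
    (hker : (((SimpleGraph.completeMultipartiteGraph (fun i : Fin m => Fin (n i))).adjMatrix ℝ
      + ((n ⟨0, lt_of_lt_of_le (by norm_num) hm⟩ : ℕ) : ℝ) • 1)) *ᵥ x = 0) :
    n ⟨0, lt_of_lt_of_le (by norm_num) hm⟩ = n ⟨1, lt_of_lt_of_le (by norm_num) hm⟩ := by
  have hm0 : 0 < m := by omega
  set c : ℝ := ((n ⟨0, hm0⟩ : ℕ) : ℝ) with hcdef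
  have hc0 : (0:ℝ) < c := by rw [hcdef]; exact_mod_cast hpos _
  have hzero : (∑ v, x v)^2
      + ∑ i, (c * (∑ k, (x ⟨i, k⟩)^2) - (∑ k, x ⟨i, k⟩)^2) = 0 := by
    rw [← quad_eq m n c x]
    rw [show (((SimpleGraph.completeMultipartiteGraph
        (fun i : Fin m => Fin (n i))).adjMatrix ℝ + c • 1)) *ᵥ x = 0 from hker,
      dotProduct_zero]
  have hsum0 : ∑ i, (c * (∑ k, (x ⟨i, k⟩)^2) - (∑ k, x ⟨i, k⟩)^2) = 0 := by
    have h1 := Finset.sum_nonneg (fun i (_ : i ∈ univ) => term_nonneg hm0 hmono x i)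
    nlinarith [sq_nonneg (∑ v, x v)]
  have hS0 : (∑ v, x v) = 0 := by
    have h2 : (∑ v, x v)^2 = 0 := by linarith
    exact pow_eq_zero_iff (two_ne_zero) |>.mp h2
  have htermzero : ∀ i : Fin m, c * (∑ k, (x ⟨i, k⟩)^2) - (∑ k, x ⟨i, k⟩)^2 = 0 :=
    fun i => (Finset.sum_eq_zero_iff_of_nonneg
      (fun i (_ : i ∈ univ) => term_nonneg hm0 hmono x i)).mp hsum0 i (mem_univ i)
  by_contra hnn
  have hlt : ((n ⟨1, by omega⟩ : ℕ) : ℝ) < c := by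
    have h1 : n ⟨1, by omega⟩ ≤ n ⟨0, hm0⟩ := hmono (Fin.le_def.mpr (Nat.zero_le _))
    have h2 : n ⟨1, by omega⟩ < n ⟨0, hm0⟩ := lt_of_le_of_ne h1 fun h => hnn h.symm
    rw [hcdef]; exact_mod_cast h2
  have hQ0 : ∀ i : Fin m, i ≠ ⟨0, hm0⟩ → ∑ k, (x ⟨i, k⟩)^2 = 0 := by
    intro i hi
    have hlei : ((n i : ℕ) : ℝ) < c := by
      have h1 : n i ≤ n ⟨1, by omega⟩ := hmono (by
        rw [Fin.le_def]
        show 1 ≤ i.val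
        have : i.val ≠ 0 := fun h => hi (Fin.ext h)
        omega)
      have h1' : ((n i : ℕ) : ℝ) ≤ ((n ⟨1, by omega⟩ : ℕ) : ℝ) := by exact_mod_cast h1
      linarith
    have hCS : (∑ k, x ⟨i, k⟩)^2 ≤ (n i : ℝ) * ∑ k, (x ⟨i, k⟩)^2 := by
      have := sq_sum_le_card_mul_sum_sq (s := (univ : Finset (Fin (n i))))
        (f := fun k => x ⟨i, k⟩)
      simpa using this
    have h2 := htermzero i
    have hQnn : 0 ≤ ∑ k, (x ⟨i, k⟩)^2 := Finset.sum_nonneg fun k _ => sq_nonneg _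
    nlinarith
  have hxzero : ∀ i : Fin m, i ≠ ⟨0, hm0⟩ → ∀ k, x ⟨i, k⟩ = 0 := by
    intro i hi k
    have := (Finset.sum_eq_zero_iff_of_nonneg
      (fun k (_ : k ∈ univ) => sq_nonneg (x ⟨i, k⟩))).mp (hQ0 i hi) k (mem_univ k)
    exact pow_eq_zero_iff (two_ne_zero) |>.mp this
  have hs00 : ∑ k, x ⟨(⟨0, hm0⟩ : Fin m), k⟩ = 0 := by
    have hsplit : ∑ v : (i : Fin m) × Fin (n i), x v = ∑ i, ∑ k, x ⟨i, k⟩ := by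
      rw [← Finset.univ_sigma_univ, Finset.sum_sigma]
    have h3 : ∑ i, ∑ k, x ⟨i, k⟩ = ∑ k, x ⟨(⟨0, hm0⟩ : Fin m), k⟩ := by
      rw [Finset.sum_eq_single (⟨0, hm0⟩ : Fin m)]
      · intro j _ hj
        exact Finset.sum_eq_zero fun k _ => hxzero j hj k
      · intro h; exact absurd (mem_univ _) h
    rw [hsplit, h3] at hS0
    exact hS0
  have hQ00 : ∑ k, (x ⟨(⟨0, hm0⟩ : Fin m), k⟩)^2 = 0 := by
    have h2 := htermzero ⟨0, hm0⟩
    rw [hs00] at h2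
    nlinarith
  apply hx0
  funext v
  obtain ⟨i, k⟩ := v
  by_cases hi : i = ⟨0, hm0⟩
  · subst hi
    have := (Finset.sum_eq_zero_iff_of_nonneg
      (fun k (_ : k ∈ univ) => sq_nonneg (x ⟨(⟨0, hm0⟩ : Fin m), k⟩))).mp hQ00 k (mem_univ k)
    exact pow_eq_zero_iff (two_ne_zero) |>.mp this
  · exact hxzero i hi k

lemma backward_lemma (hm : 2 ≤ m) (hpos : ∀ i, 0 < n i)
    (heqn : n ⟨0, lt_of_lt_of_le (by norm_num) hm⟩ = n ⟨1, lt_of_lt_of_le (by norm_num) hm⟩) :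
    ∃ x : ((i : Fin m) × Fin (n i)) → ℝ, x ≠ 0 ∧
      (((SimpleGraph.completeMultipartiteGraph (fun i : Fin m => Fin (n i))).adjMatrix ℝ
        + ((n ⟨0, lt_of_lt_of_le (by norm_num) hm⟩ : ℕ) : ℝ) • 1)) *ᵥ x = 0 := by
  have hm0 : 0 < m := by omega
  have hm1 : 1 < m := by omega
  have h01 : (⟨0, hm0⟩ : Fin m) ≠ ⟨1, hm1⟩ := by simp [Fin.ext_iff]
  refine ⟨fun v => if v.1 = ⟨0, hm0⟩ then 1 else if v.1 = ⟨1, hm1⟩ then -1 else 0, ?_, ?_⟩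
  · intro h
    have := congrFun h ⟨⟨0, hm0⟩, ⟨0, hpos _⟩⟩
    simp at this
  · set x : ((i : Fin m) × Fin (n i)) → ℝ :=
      fun v => if v.1 = ⟨0, hm0⟩ then 1 else if v.1 = ⟨1, hm1⟩ then -1 else 0 with hxdef
    have hs : ∀ j : Fin m, ∑ k, x ⟨j, k⟩
        = (if j = ⟨0, hm0⟩ then (n j : ℝ) else if j = ⟨1, hm1⟩ then -(n j : ℝ) else 0) := by
      intro j
      by_cases h1 : j = ⟨0, hm0⟩
      · simp [hxdef, h1, Finset.sum_const, mul_comm]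
      · by_cases h2 : j = ⟨1, hm1⟩ <;> simp [hxdef, h1, h2, Finset.sum_const, mul_comm]
    have hS : ∑ v : (i : Fin m) × Fin (n i), x v = 0 := by
      rw [← Finset.univ_sigma_univ, Finset.sum_sigma]
      simp_rw [hs]
      have hrw : ∀ j : Fin m,
          (if j = ⟨0, hm0⟩ then (n j : ℝ) else if j = ⟨1, hm1⟩ then -(n j : ℝ) else 0)
          = (if j = ⟨0, hm0⟩ then ((n ⟨0, hm0⟩ : ℕ) : ℝ) else 0)
            + (if j = ⟨1, hm1⟩ then -((n ⟨1, hm1⟩ : ℕ) : ℝ) else 0) := by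
        intro j
        by_cases h1 : j = ⟨0, hm0⟩
        · subst h1; simp [h01]
        · by_cases h2 : j = ⟨1, hm1⟩
          · subst h2; simp [Ne.symm h01]
          · simp [h1, h2]
      simp_rw [hrw]
      rw [Finset.sum_add_distrib, Finset.sum_ite_eq' univ (⟨0, hm0⟩ : Fin m),
        Finset.sum_ite_eq' univ (⟨1, hm1⟩ : Fin m)]
      simp [heqn]
    rw [mulVec_eq m n _ x]
    funext v
    rw [hS, hs v.1]
    obtain ⟨i, k⟩ := v
    by_cases h1 : i = ⟨0, hm0⟩
    · subst h1; simp [hxdef]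
    · by_cases h2 : i = ⟨1, hm1⟩
      · subst h2
        have hc : ((n (⟨1, hm1⟩ : Fin m) : ℕ) : ℝ) = ((n ⟨0, hm0⟩ : ℕ) : ℝ) := by
          exact_mod_cast heqn.symm
        simp [hxdef, h1, hc]
      · simp [hxdef, h1, h2]

end helpers

theorem stmt8 (m : ℕ) (hm : 2 ≤ m) (n : Fin m → ℕ) (hpos : ∀ i, 0 < n i)
    (hmono : Antitone n) :
    minEig (⟨⟨⟨0, by omega⟩, ⟨0, hpos _⟩⟩⟩ : Nonempty (Σ i : Fin m, Fin (n i)))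
        (adjHerm (SimpleGraph.completeMultipartiteGraph (fun i : Fin m => Fin (n i)))) ≥
      -(n ⟨0, by omega⟩ : ℝ) ∧
    (minEig (⟨⟨⟨0, by omega⟩, ⟨0, hpos _⟩⟩⟩ : Nonempty (Σ i : Fin m, Fin (n i)))
        (adjHerm (SimpleGraph.completeMultipartiteGraph (fun i : Fin m => Fin (n i)))) =
        -(n ⟨0, by omega⟩ : ℝ) ↔ n ⟨0, by omega⟩ = n ⟨1, by omega⟩) := by
  have hm0 : 0 < m := by omega
  have hA := adjHerm (SimpleGraph.completeMultipartiteGraph (fun i : Fin m => Fin (n i)))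
  have hbound : ∀ v, -((n ⟨0, hm0⟩ : ℕ) : ℝ) ≤ hA.eigenvalues v :=
    eig_ge hA _ (quad_nonneg hm0 hmono)
  have hgoal1 : minEig (⟨⟨⟨0, by omega⟩, ⟨0, hpos _⟩⟩⟩ : Nonempty (Σ i : Fin m, Fin (n i)))
      (adjHerm (SimpleGraph.completeMultipartiteGraph (fun i : Fin m => Fin (n i))))
      ≥ -(n ⟨0, by omega⟩ : ℝ) :=
    Finset.le_inf' _ _ (fun b _ => hbound b)
  refine ⟨hgoal1, ?_, ?_⟩
  · intro heq
    unfold minEig at heq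
    obtain ⟨j, -, hj⟩ := Finset.exists_mem_eq_inf'
      (Finset.univ_nonempty_iff.mpr
        (⟨⟨⟨0, by omega⟩, ⟨0, hpos _⟩⟩⟩ : Nonempty (Σ i : Fin m, Fin (n i)))) hA.eigenvalues
    have hjval : hA.eigenvalues j = -((n ⟨0, hm0⟩ : ℕ) : ℝ) := by rw [← hj]; exact heq
    obtain ⟨x, hx0, hker⟩ := (exists_eigen_iff hA _).mp ⟨j, hjval⟩
    exact forward_lemma hm hpos hmono x hx0 hker
  · intro heqn
    obtain ⟨x, hx0, hker⟩ := backward_lemma hm hpos heqn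
    obtain ⟨j, hj⟩ := (exists_eigen_iff hA _).mpr ⟨x, hx0, hker⟩
    refine le_antisymm ?_ hgoal1
    unfold minEig
    calc Finset.univ.inf' _ hA.eigenvalues ≤ hA.eigenvalues j := Finset.inf'_le _ (mem_univ j)
      _ = -((n ⟨0, hm0⟩ : ℕ) : ℝ) := hj
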